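/- Let m ≥ 1 and κ ≥ 1. Let P^in be the uniform probability measure on the cube [0,1]^m ⊂ ℝ^m, and let P be any probability measure on ℝ^m whose support is contained in the set S = [1/(2κ), 1 − 1/(2κ)]^m. Then for every coupling γ of P^in and P (i.e., every probability measure on ℝ^m × ℝ^m whose first marginal is P^in and whose second marginal is P), ∫ ‖x − y‖² dγ(x,y) ≥ (1/(4κ))² · (1 − (1 − 1/(2κ))^m). -/

import Mathlib

open MeasureTheory

noncomputable section

/-- The unit cube `[0,1]^m ⊂ ℝ^m`. -/
def unitCube (m : ℕ) : Set (EuclideanSpace ℝ (Fin m)) :=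
  {x | ∀ i, x i ∈ Set.Icc (0 : ℝ) 1}

/-- The uniform probability measure on `[0,1]^m`: the restriction of Lebesgue measure to
the unit cube. -/
def cubeUniform (m : ℕ) : Measure (EuclideanSpace ℝ (Fin m)) :=
  volume.restrict (unitCube m)

/-- The shrunken cube `S = [1/(2κ), 1 − 1/(2κ)]^m`. -/
def shrunkenCube (m κ : ℕ) : Set (EuclideanSpace ℝ (Fin m)) :=
  {x | ∀ i, x i ∈ Set.Icc (1 / (2 * (κ : ℝ))) (1 - 1 / (2 * (κ : ℝ)))}

/-- if `P^in` is the uniform probability measure on `[0,1]^m` and `P` is a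
probability measure supported in `S = [1/(2κ), 1 − 1/(2κ)]^m`, then every coupling `γ`
of `P^in` and `P` satisfies `∫ ‖x − y‖² dγ ≥ (1/(4κ))²·(1 − (1 − 1/(2κ))^m)`. -/
lemma aux_meas_cube (m : ℕ) (a b : ℝ) :
    MeasurableSet {x : EuclideanSpace ℝ (Fin m) | ∀ i, x i ∈ Set.Icc a b} := by
  have : {x : EuclideanSpace ℝ (Fin m) | ∀ i, x i ∈ Set.Icc a b}
      = ⋂ i, (fun x : EuclideanSpace ℝ (Fin m) => x i) ⁻¹' Set.Icc a b := by
    ext x; simp [Set.mem_iInter]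
  rw [this]
  exact MeasurableSet.iInter fun i =>
    ((EuclideanSpace.proj (𝕜 := ℝ) i).continuous.measurable) measurableSet_Icc

lemma aux_vol_cube (m : ℕ) (a b : ℝ) :
    volume {x : EuclideanSpace ℝ (Fin m) | ∀ i, x i ∈ Set.Icc a b}
      = ∏ _i : Fin m, ENNReal.ofReal (b - a) := by
  have hset : {x : EuclideanSpace ℝ (Fin m) | ∀ i, x i ∈ Set.Icc a b}
      = (MeasurableEquiv.toLp 2 (Fin m → ℝ)).symm ⁻¹' (Set.univ.pi fun _ => Set.Icc a b) := by
    ext x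
    exact ⟨fun h i _ => h i, fun h i => h i (Set.mem_univ i)⟩
  rw [hset, (EuclideanSpace.volume_preserving_symm_measurableEquiv_toLp (Fin m)).measure_preimage
      ((MeasurableSet.univ_pi fun _ => measurableSet_Icc).nullMeasurableSet),
    volume_pi_pi]
  simp [Real.volume_Icc]

theorem statement7 (m κ : ℕ) (hm : 1 ≤ m) (hκ : 1 ≤ κ)
    (P : Measure (EuclideanSpace ℝ (Fin m))) [IsProbabilityMeasure P]
    (hP : P (shrunkenCube m κ)ᶜ = 0)
    (γ : Measure (EuclideanSpace ℝ (Fin m) × EuclideanSpace ℝ (Fin m)))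
    [IsProbabilityMeasure γ]
    (hγ₁ : γ.map Prod.fst = cubeUniform m) (hγ₂ : γ.map Prod.snd = P) :
    (1 / (4 * (κ : ℝ))) ^ 2 * (1 - (1 - 1 / (2 * (κ : ℝ))) ^ m)
      ≤ ∫ z, ‖z.1 - z.2‖ ^ 2 ∂γ := by
  have hκ0 : (0 : ℝ) < κ := by exact_mod_cast hκ
  have hκ1 : (1 : ℝ) ≤ κ := by exact_mod_cast hκ
  set c : ℝ := 1 / (4 * (κ : ℝ)) with hc
  have hc0 : 0 < c := by positivity
  have h2c : 2 * c = 1 / (2 * (κ : ℝ)) := by rw [hc]; ring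
  have h2c1 : 2 * c ≤ 1 / 2 := by
    rw [h2c]
    rw [div_le_div_iff₀ (by positivity) (by norm_num)]
    nlinarith
  -- the enlarged cube T
  set T : Set (EuclideanSpace ℝ (Fin m)) := {x | ∀ i, x i ∈ Set.Icc c (1 - c)} with hT
  have hTmeas : MeasurableSet T := aux_meas_cube m c (1 - c)
  -- a.e. z.2 ∈ S
  have hSmeas : MeasurableSet (shrunkenCube m κ) :=
    aux_meas_cube m (1 / (2 * (κ : ℝ))) (1 - 1 / (2 * (κ : ℝ)))
  have haeS : ∀ᵐ z ∂γ, z.2 ∈ shrunkenCube m κ := by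
    have : γ (Prod.snd ⁻¹' (shrunkenCube m κ)ᶜ) = 0 := by
      rw [← Measure.map_apply measurable_snd hSmeas.compl, hγ₂]; exact hP
    filter_upwards [measure_eq_zero_iff_ae_notMem.mp this] with z hz
    exact not_not.mp hz
  -- measure of the event z.1 ∈ T
  have hγT : γ {z | z.1 ∈ T} = ENNReal.ofReal ((1 - 1 / (2 * (κ : ℝ))) ^ m) := by
    have : γ {z | z.1 ∈ T} = (γ.map Prod.fst) T := by
      rw [Measure.map_apply measurable_fst hTmeas]; rfl
    rw [this, hγ₁]
    have hTsub : T ⊆ unitCube m := by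
      intro x hx i
      have := hx i
      constructor
      · linarith [this.1]
      · linarith [this.2]
    rw [cubeUniform, Measure.restrict_apply hTmeas, Set.inter_eq_self_of_subset_left hTsub]
    rw [hT, aux_vol_cube]
    rw [Finset.prod_const]
    rw [← ENNReal.ofReal_pow (by linarith)]
    congr 2
    · linarith [h2c]
    · simp
  -- key event E
  set E : Set (EuclideanSpace ℝ (Fin m) × EuclideanSpace ℝ (Fin m)) := {z | z.1 ∉ T} with hE
  have hEmeas : MeasurableSet E := (measurable_fst hTmeas).compl
  have hγE : (γ E).toReal = 1 - (1 - 1 / (2 * (κ : ℝ))) ^ m := by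
    have hcomp : Eᶜ = {z | z.1 ∈ T} := by ext z; simp [hE]
    have h1 : γ E = 1 - ENNReal.ofReal ((1 - 1 / (2 * (κ : ℝ))) ^ m) := by
      have hEc : E = (Prod.fst ⁻¹' T :
          Set (EuclideanSpace ℝ (Fin m) × EuclideanSpace ℝ (Fin m)))ᶜ := by
        ext z; simp [hE]
      have hpre : γ (Prod.fst ⁻¹' T) = ENNReal.ofReal ((1 - 1 / (2 * (κ : ℝ))) ^ m) := hγT
      rw [hEc, prob_compl_eq_one_sub (measurable_fst hTmeas), hpre]
    rw [h1]
    have hle : ENNReal.ofReal ((1 - 1 / (2 * (κ : ℝ))) ^ m) ≤ 1 := by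
      rw [← ENNReal.ofReal_one]
      apply ENNReal.ofReal_le_ofReal
      apply pow_le_one₀ <;> nlinarith
    rw [ENNReal.toReal_sub_of_le hle (by norm_num), ENNReal.toReal_one,
      ENNReal.toReal_ofReal (pow_nonneg (by nlinarith [h2c, h2c1]) m)]
  -- pointwise bound: indicator below the integrand a.e.
  have hpt : ∀ᵐ z ∂γ, E.indicator (fun _ => c ^ 2) z ≤ ‖z.1 - z.2‖ ^ 2 := by
    filter_upwards [haeS] with z hzS
    by_cases hzE : z ∈ E
    · rw [Set.indicator_of_mem hzE]
      obtain ⟨i, hi⟩ : ∃ i, z.1 i ∉ Set.Icc c (1 - c) := by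
        by_contra h
        push_neg at h
        exact hzE h
      have hyi := hzS i
      have hdist : c ≤ |z.1 i - z.2 i| := by
        rw [Set.mem_Icc, not_and_or] at hi
        rcases hi with hi | hi
        · push_neg at hi
          rw [abs_sub_comm, le_abs]
          left
          have : 1 / (2 * (κ : ℝ)) ≤ z.2 i := hyi.1
          linarith [h2c]
        · push_neg at hi
          rw [le_abs]
          left
          have : z.2 i ≤ 1 - 1 / (2 * (κ : ℝ)) := hyi.2
          linarith [h2c]
      have hnorm : |z.1 i - z.2 i| ≤ ‖z.1 - z.2‖ := by
        have : ‖(z.1 - z.2) i‖ ≤ ‖z.1 - z.2‖ := by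
          rw [EuclideanSpace.norm_eq]
          have h1 : ‖(z.1 - z.2) i‖ = Real.sqrt (‖(z.1 - z.2) i‖ ^ 2) := by
            rw [Real.sqrt_sq (norm_nonneg _)]
          rw [h1]
          apply Real.sqrt_le_sqrt
          exact Finset.single_le_sum (f := fun j => ‖(z.1 - z.2) j‖ ^ 2)
            (fun j _ => by positivity) (Finset.mem_univ i)
        simpa [Real.norm_eq_abs] using this
      calc c ^ 2 ≤ |z.1 i - z.2 i| ^ 2 := by
            apply pow_le_pow_left₀ hc0.le hdist
        _ ≤ ‖z.1 - z.2‖ ^ 2 := by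
            apply pow_le_pow_left₀ (abs_nonneg _) hnorm
    · rw [Set.indicator_of_notMem hzE]
      positivity
  -- integrability of the integrand
  have haeCube : ∀ᵐ z ∂γ, z.1 ∈ unitCube m := by
    have hUmeas : MeasurableSet (unitCube m) := aux_meas_cube m 0 1
    have : γ (Prod.fst ⁻¹' (unitCube m)ᶜ) = 0 := by
      rw [← Measure.map_apply measurable_fst hUmeas.compl, hγ₁, cubeUniform,
        Measure.restrict_apply hUmeas.compl]
      simp
    filter_upwards [measure_eq_zero_iff_ae_notMem.mp this] with z hz
    exact not_not.mp hz
  have hint : Integrable (fun z => ‖z.1 - z.2‖ ^ 2) γ := by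
    apply Integrable.mono' (g := fun _ => (m : ℝ)) (integrable_const _)
    · exact (Continuous.norm (continuous_fst.sub continuous_snd)).pow 2
        |>.aestronglyMeasurable
    · filter_upwards [haeS, haeCube] with z hzS hzC
      rw [Real.norm_eq_abs, abs_of_nonneg (by positivity)]
      have : ‖z.1 - z.2‖ ^ 2 = ∑ i, ‖(z.1 - z.2) i‖ ^ 2 := by
        rw [EuclideanSpace.norm_eq, Real.sq_sqrt]
        positivity
      rw [this]
      calc ∑ i, ‖(z.1 - z.2) i‖ ^ 2 ≤ ∑ _i : Fin m, (1 : ℝ) := by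
            apply Finset.sum_le_sum
            intro i _
            have h1 := hzC i
            have h2 := hzS i
            have hx : (z.1 - z.2) i = z.1 i - z.2 i := rfl
            rw [hx, Real.norm_eq_abs, sq_abs]
            have hb1 : 0 ≤ z.2 i := by
              have := h2.1; nlinarith [h2c, h2c1]
            have hb2 : z.2 i ≤ 1 := by
              have := h2.2; nlinarith [h2c, h2c1]
            nlinarith [h1.1, h1.2]
        _ = (m : ℝ) := by simp
  have hintg : Integrable (E.indicator fun _ => c ^ 2) γ :=
    (integrable_const _).indicator hEmeas
  have hmain := integral_mono_ae hintg hint hpt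
  rw [integral_indicator_const _ hEmeas] at hmain
  rw [smul_eq_mul, measureReal_def, hγE] at hmain
  linarith [hmain]

end
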